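/- Let m be even and p odd with p | m. Then the group G(m, p, 2) contains exactly m + 3 elements of order 2. -/

import Mathlib

open Matrix

lemma mat2_eq_iff {α : Type*} (a b c d e f g h : α) :
    !![a,b;c,d] = !![e,f;g,h] ↔ a=e ∧ b=f ∧ c=g ∧ d=h := by
  rw [← Matrix.ext_iff]
  constructor
  · intro hh
    exact ⟨hh 0 0, hh 0 1, hh 1 0, hh 1 1⟩
  · rintro ⟨h1,h2,h3,h4⟩ i j
    fin_cases i <;> fin_cases j <;> simpa


/-- The set of matrices of the group `G(m,p,2)`: diagonal and antidiagonal matrices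
with entries powers `θ^{α₁}, θ^{α₂}` of `θ = exp(2πi/m)` with `α₁ + α₂ ≡ 0 (mod p)`. -/
noncomputable def Gmat (m p : ℕ) : Set (Matrix (Fin 2) (Fin 2) ℂ) :=
  {A | ∃ α₁ α₂ : ℕ, p ∣ (α₁ + α₂) ∧
    (A = !![Complex.exp (2 * Real.pi * Complex.I / m) ^ α₁, 0;
            0, Complex.exp (2 * Real.pi * Complex.I / m) ^ α₂] ∨
     A = !![0, Complex.exp (2 * Real.pi * Complex.I / m) ^ α₁;
            Complex.exp (2 * Real.pi * Complex.I / m) ^ α₂, 0])}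


/-- For `m` even and `p` odd with `p ∣ m`, the group `G(m,p,2)` contains exactly
`m + 3` elements of order `2`. -/
theorem stmt_14 (m p : ℕ) (hm : 0 < m) (hme : Even m) (hpo : Odd p) (hpm : p ∣ m) :
    {A ∈ Gmat m p | A * A = 1 ∧ A ≠ 1}.ncard = m + 3 := by
  classical
  set θ : ℂ := Complex.exp (2 * Real.pi * Complex.I / m) with hθ
  have hprim : IsPrimitiveRoot θ m := Complex.isPrimitiveRoot_exp m hm.ne'
  have hθm : θ ^ m = 1 := hprim.pow_eq_one
  have hm0 : m % 2 = 0 := Nat.even_iff.mp hme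
  have hm2 : m / 2 + m / 2 = m := by omega
  have hneg : θ ^ (m / 2) = -1 := by
    have h1 : θ ^ (m/2) * θ ^ (m/2) = 1 := by rw [← pow_add, hm2, hθm]
    rcases mul_self_eq_one_iff.mp h1 with h | h
    · exact absurd h (hprim.pow_ne_one_of_pos_of_lt (by omega) (by omega))
    · exact h
  have hpm2 : p ∣ m / 2 := by
    have h2 : Nat.Coprime p 2 := Nat.coprime_two_right.mpr hpo
    have h3 : p ∣ (m / 2) * 2 := by rw [Nat.div_mul_cancel hme.two_dvd]; exact hpm
    exact (Nat.Coprime.dvd_of_dvd_mul_right h2 h3)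
  set S : Finset (Matrix (Fin 2) (Fin 2) ℂ) :=
    ((Finset.range m).image fun a => !![0, θ^a; θ^(m-a), 0]) ∪
      {!![-1,0;0,-1], !![1,0;0,-1], !![-1,0;0,1]} with hS
  have hset : {A ∈ Gmat m p | A * A = 1 ∧ A ≠ 1} = ↑S := by
    ext A
    simp only [Set.mem_setOf_eq, Gmat, hS, Finset.coe_union, Set.mem_union,
      Finset.coe_image, Set.mem_image, Finset.mem_coe, Finset.coe_range, Set.mem_Iio,
      Finset.mem_insert, Finset.mem_singleton]
    constructor
    · rintro ⟨⟨α₁, α₂, hp, hA | hA⟩, hsq, hne⟩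
      · subst hA
        rw [Matrix.mul_fin_two, Matrix.one_fin_two, mat2_eq_iff] at hsq
        obtain ⟨h1, -, -, h4⟩ := hsq
        simp only [mul_zero, zero_mul, add_zero, zero_add] at h1 h4
        right
        rcases mul_self_eq_one_iff.mp h1 with e1 | e1 <;>
          rcases mul_self_eq_one_iff.mp h4 with e2 | e2 <;> rw [e1, e2]
        · exact absurd (by rw [e1, e2, Matrix.one_fin_two]) hne
        · right; left; rfl
        · right; right; rfl
        · left; rfl
      · subst hA
        rw [Matrix.mul_fin_two, Matrix.one_fin_two, mat2_eq_iff] at hsq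
        obtain ⟨h1, -, -, -⟩ := hsq
        simp only [mul_zero, zero_mul, add_zero, zero_add] at h1
        left
        refine ⟨α₁ % m, Nat.mod_lt _ hm, ?_⟩
        have ha : θ ^ (α₁ % m) = θ ^ α₁ := by
          conv_rhs => rw [← Nat.mod_add_div α₁ m]
          rw [pow_add, pow_mul, hθm, one_pow, mul_one]
        have hb : θ ^ (m - α₁ % m) = θ ^ α₂ := by
          have hlt : α₁ % m < m := Nat.mod_lt _ hm
          have key : θ ^ (α₁ % m) * θ ^ (m - α₁ % m) = θ ^ (α₁ % m) * θ ^ α₂ := by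
            rw [← pow_add, Nat.add_sub_cancel' hlt.le, hθm, ha, h1]
          exact mul_left_cancel₀ (pow_ne_zero _ (hprim.ne_zero hm.ne')) key
        rw [ha, hb]
    · have hone : (1 : Matrix (Fin 2) (Fin 2) ℂ) = !![1,0;0,1] := Matrix.one_fin_two
      rintro (⟨a, ha, rfl⟩ | rfl | rfl | rfl)
      · refine ⟨⟨a, m - a, by rw [Nat.add_sub_cancel' ha.le]; exact hpm, Or.inr rfl⟩, ?_, ?_⟩
        · have hmul : θ^a * θ^(m-a) = 1 := by
            rw [← pow_add, Nat.add_sub_cancel' ha.le, hθm]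
          have hmul2 : θ^(m-a) * θ^a = 1 := by rw [mul_comm]; exact hmul
          rw [Matrix.mul_fin_two, hone, mat2_eq_iff]
          simp [hmul, hmul2]
        · simp only [hone, Ne, mat2_eq_iff]
          norm_num
      · refine ⟨⟨m/2, m/2, by rw [hm2]; exact hpm, Or.inl (by rw [hneg])⟩, ?_, ?_⟩
        · rw [Matrix.mul_fin_two, hone, mat2_eq_iff]; norm_num
        · simp only [hone, Ne, mat2_eq_iff]; norm_num
      · refine ⟨⟨0, m/2, by simpa using hpm2, Or.inl (by rw [hneg, pow_zero])⟩, ?_, ?_⟩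
        · rw [Matrix.mul_fin_two, hone, mat2_eq_iff]; norm_num
        · simp only [hone, Ne, mat2_eq_iff]; norm_num
      · refine ⟨⟨m/2, 0, by simpa using hpm2, Or.inl (by rw [hneg, pow_zero])⟩, ?_, ?_⟩
        · rw [Matrix.mul_fin_two, hone, mat2_eq_iff]; norm_num
        · simp only [hone, Ne, mat2_eq_iff]; norm_num
  rw [hset, Set.ncard_coe_finset, hS]
  have hdisj : Disjoint ((Finset.range m).image fun a => !![0, θ^a; θ^(m-a), 0])
      ({!![-1,0;0,-1], !![1,0;0,-1], !![-1,0;0,1]} : Finset (Matrix (Fin 2) (Fin 2) ℂ)) := by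
    rw [Finset.disjoint_left]
    rintro A hA hB
    simp only [Finset.mem_image, Finset.mem_range] at hA
    obtain ⟨a, -, rfl⟩ := hA
    simp only [Finset.mem_insert, Finset.mem_singleton, mat2_eq_iff] at hB
    norm_num at hB
  rw [Finset.card_union_of_disjoint hdisj]
  have hinj : Set.InjOn (fun a => !![0, θ^a; θ^(m-a), 0]) (Finset.range m) := by
    intro a ha b hb hab
    simp only [Finset.coe_range, Set.mem_Iio] at ha hb
    simp only [mat2_eq_iff] at hab
    exact hprim.pow_inj ha hb hab.2.1
  rw [Finset.card_image_of_injOn hinj, Finset.card_range]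
  have h3 : ({!![-1,0;0,-1], !![1,0;0,-1], !![-1,0;0,1]} : Finset (Matrix (Fin 2) (Fin 2) ℂ)).card = 3 := by
    rw [Finset.card_insert_of_notMem (by
        simp only [Finset.mem_insert, Finset.mem_singleton, mat2_eq_iff]; norm_num),
       Finset.card_insert_of_notMem (by
        simp only [Finset.mem_singleton, mat2_eq_iff]; norm_num), Finset.card_singleton]
  rw [h3]
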